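/- arXiv:2008.12576 — 3 statements merged into one kernel-verified Lean document; each statement's English description precedes it below -/
import Mathlib

section
/- Let g be a positive integer, σ > 0, N a positive integer, and define ε_{g,σ} = 1 − (1/√2)(1 + 2·Σ_{k∈ℕᴺ, k≠0} exp(−g²‖k‖₂²σ²/2)). Then ε_{g,σ} ≥ 1 − (1/√2)(2·(1 − exp(−g²σ²/2))^{−N} − 1). -/
open Real

/-- Sum over `Fin N → ℕ` of products of geometric terms. -/
lemma hasSum_pi_geom (q : ℝ) (h0 : 0 ≤ q) (h1 : q < 1) :
    ∀ N : ℕ, HasSum (fun k : Fin N → ℕ => ∏ i, q ^ k i) (((1 - q)⁻¹) ^ N) := by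
  intro N
  induction N with
  | zero =>
      simpa using hasSum_unique (α := ℝ) (f := fun _ : Fin 0 → ℕ => (1 : ℝ))
  | succ n ih =>
      have hgeo : HasSum (fun m : ℕ => q ^ m) (1 - q)⁻¹ :=
        hasSum_geometric_of_lt_one h0 h1
      have hs : Summable (fun p : ℕ × (Fin n → ℕ) => q ^ p.1 * ∏ i, q ^ p.2 i) :=
        Summable.mul_of_nonneg (f := fun m : ℕ => q ^ m)
          (g := fun k : Fin n → ℕ => ∏ i, q ^ k i) hgeo.summable ih.summable
          (fun m => pow_nonneg h0 m)
          (fun k => Finset.prod_nonneg fun i _ => pow_nonneg h0 _)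
      have hmul : HasSum (fun p : ℕ × (Fin n → ℕ) => q ^ p.1 * ∏ i, q ^ p.2 i)
          ((1 - q)⁻¹ * ((1 - q)⁻¹) ^ n) :=
        HasSum.mul (f := fun m : ℕ => q ^ m)
          (g := fun k : Fin n → ℕ => ∏ i, q ^ k i) hgeo ih hs
      let e : ℕ × (Fin n → ℕ) ≃ (Fin (n + 1) → ℕ) := Fin.consEquiv fun _ => ℕ
      have hcomp : (fun k : Fin (n + 1) → ℕ => ∏ i, q ^ k i) ∘ e
          = fun p : ℕ × (Fin n → ℕ) => q ^ p.1 * ∏ i, q ^ p.2 i := by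
        funext p
        simp [e, Fin.consEquiv, Fin.prod_univ_succ]
      have := (e.hasSum_iff (f := fun k : Fin (n + 1) → ℕ => ∏ i, q ^ k i)
        (a := (1 - q)⁻¹ * ((1 - q)⁻¹) ^ n)).mp (by rw [hcomp]; exact hmul)
      simpa [pow_succ, mul_comm] using this

/-- Pointwise geometric bound for the Gaussian terms. -/
lemma exp_term_le_geom (c : ℝ) (hc : 0 < c) (m : ℕ) :
    Real.exp (-((m : ℝ) ^ 2 * c)) ≤ Real.exp (-c) ^ m := by
  rw [← Real.exp_nat_mul]
  apply Real.exp_le_exp.mpr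
  have hm : (m : ℝ) ≤ (m : ℝ) ^ 2 := by
    rcases Nat.eq_zero_or_pos m with h | h
    · simp [h]
    · have h1 : (1 : ℝ) ≤ (m : ℝ) := by exact_mod_cast h
      nlinarith
  nlinarith

/-- The Gaussian term factors as a product over coordinates. -/
lemma exp_factor {N : ℕ} (a b : ℝ) (k : Fin N → ℕ) :
    Real.exp (-(a * (∑ i, ((k i : ℝ)) ^ 2) * b) / 2)
      = ∏ i, Real.exp (-(((k i : ℝ)) ^ 2 * (a * b / 2))) := by
  rw [← Real.exp_sum]
  congr 1
  have h : ∀ x : Fin N, -(((k x : ℝ)) ^ 2 * (a * b / 2))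
      = ((k x : ℝ)) ^ 2 * (-(a * b) / 2) := fun x => by ring
  rw [Finset.sum_congr rfl fun x _ => h x, ← Finset.sum_mul]
  ring

/-- The no-go bound `ε_{g,σ}` is lower bounded via a geometric-series relaxation. -/
theorem epsilon_geometric_lower_bound (g N : ℕ) (hg : 0 < g) (hN : 0 < N) (σ : ℝ) (hσ : 0 < σ) :
    1 - (1 / Real.sqrt 2) *
        (1 + 2 * ∑' k : {k : Fin N → ℕ // k ≠ 0},
          Real.exp (-((g : ℝ) ^ 2 * (∑ i, ((k.1 i : ℝ)) ^ 2) * σ ^ 2) / 2))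
      ≥ 1 - (1 / Real.sqrt 2) *
        (2 * ((1 - Real.exp (-((g : ℝ) ^ 2 * σ ^ 2) / 2))⁻¹) ^ N - 1) := by
  have hgpos : (0 : ℝ) < (g : ℝ) := by exact_mod_cast hg
  have hcpos : (0 : ℝ) < (g : ℝ) ^ 2 * σ ^ 2 / 2 := by positivity
  have hq1 : Real.exp (-((g : ℝ) ^ 2 * σ ^ 2) / 2) < 1 := by
    rw [Real.exp_lt_one_iff]
    linarith [hcpos]
  set q : ℝ := Real.exp (-((g : ℝ) ^ 2 * σ ^ 2) / 2) with hqdef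
  have hq0 : (0 : ℝ) ≤ q := (Real.exp_pos _).le
  have hqc : q = Real.exp (-((g : ℝ) ^ 2 * σ ^ 2 / 2)) := by rw [hqdef, neg_div]
  have hFsum : HasSum (fun k : Fin N → ℕ => ∏ i, q ^ k i) (((1 - q)⁻¹) ^ N) :=
    hasSum_pi_geom q hq0 hq1 N
  have hfF : ∀ k : Fin N → ℕ,
      Real.exp (-((g : ℝ) ^ 2 * (∑ i, ((k i : ℝ)) ^ 2) * σ ^ 2) / 2) ≤ ∏ i, q ^ k i := by
    intro k
    rw [exp_factor]
    refine Finset.prod_le_prod (fun i _ => (Real.exp_pos _).le) (fun i _ => ?_)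
    rw [hqc]
    exact exp_term_le_geom _ hcpos (k i)
  have hf0 : ∀ k : Fin N → ℕ,
      (0 : ℝ) ≤ Real.exp (-((g : ℝ) ^ 2 * (∑ i, ((k i : ℝ)) ^ 2) * σ ^ 2) / 2) :=
    fun k => (Real.exp_pos _).le
  have hfsum : Summable (fun k : Fin N → ℕ =>
      Real.exp (-((g : ℝ) ^ 2 * (∑ i, ((k i : ℝ)) ^ 2) * σ ^ 2) / 2)) :=
    Summable.of_nonneg_of_le hf0 hfF hFsum.summable
  have hsplit : (1 : ℝ) + (∑' k : {k : Fin N → ℕ // k ≠ 0},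
      Real.exp (-((g : ℝ) ^ 2 * (∑ i, ((k.1 i : ℝ)) ^ 2) * σ ^ 2) / 2))
      = ∑' k : Fin N → ℕ,
        Real.exp (-((g : ℝ) ^ 2 * (∑ i, ((k i : ℝ)) ^ 2) * σ ^ 2) / 2) := by
    have h1 : (∑' k : ({0} : Set (Fin N → ℕ)),
        Real.exp (-((g : ℝ) ^ 2 * (∑ i, ((k.1 i : ℝ)) ^ 2) * σ ^ 2) / 2)) = 1 := by
      rw [tsum_singleton 0 (fun k : Fin N → ℕ =>
        Real.exp (-((g : ℝ) ^ 2 * (∑ i, ((k i : ℝ)) ^ 2) * σ ^ 2) / 2))]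
      simp
    have h2 := Summable.tsum_subtype_add_tsum_subtype_compl hfsum ({0} : Set (Fin N → ℕ))
    rw [h1] at h2
    convert h2 using 2
    rfl
  have hle : (∑' k : Fin N → ℕ,
      Real.exp (-((g : ℝ) ^ 2 * (∑ i, ((k i : ℝ)) ^ 2) * σ ^ 2) / 2))
      ≤ ((1 - q)⁻¹) ^ N := by
    rw [← hFsum.tsum_eq]
    exact Summable.tsum_le_tsum hfF hfsum hFsum.summable
  have hS : (∑' k : {k : Fin N → ℕ // k ≠ 0},
      Real.exp (-((g : ℝ) ^ 2 * (∑ i, ((k.1 i : ℝ)) ^ 2) * σ ^ 2) / 2))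
      ≤ ((1 - q)⁻¹) ^ N - 1 := by linarith
  have hA : (0 : ℝ) ≤ 1 / Real.sqrt 2 := by positivity
  rw [ge_iff_le, sub_le_sub_iff_left]
  apply mul_le_mul_of_nonneg_left _ hA
  linarith
end

section
/- For every positive integer n, n^n/n! ≤ e^n/√(2πn). -/
open Stirling Real

lemma sqrt_pi_le_stirlingSeq (n : ℕ) (hn : 0 < n) : Real.sqrt Real.pi ≤ stirlingSeq n := by
  obtain ⟨m, rfl⟩ := Nat.exists_eq_add_of_lt hn
  simp only [zero_add]
  have h : Filter.Tendsto (stirlingSeq ∘ Nat.succ) Filter.atTop (nhds (Real.sqrt Real.pi)) :=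
    tendsto_stirlingSeq_sqrt_pi.comp (Filter.tendsto_add_atTop_nat 1)
  exact stirlingSeq'_antitone.le_of_tendsto h m

/-- Stirling-type bound: `n^n / n! ≤ eⁿ / √(2πn)` for every positive integer `n`. -/
theorem pow_div_factorial_le (n : ℕ) (hn : 0 < n) :
    (n : ℝ) ^ n / (Nat.factorial n : ℝ) ≤ Real.exp n / Real.sqrt (2 * Real.pi * n) := by
  have h := sqrt_pi_le_stirlingSeq n hn
  rw [stirlingSeq] at h
  have hnR : (0:ℝ) < n := by exact_mod_cast hn
  have hfac : (0:ℝ) < (Nat.factorial n : ℝ) := by exact_mod_cast n.factorial_pos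
  have hs2n : (0:ℝ) < Real.sqrt (2 * n) := Real.sqrt_pos.mpr (by positivity)
  have hpow : (0:ℝ) < ((n:ℝ) / Real.exp 1) ^ n := by positivity
  have hsq : Real.sqrt (2 * Real.pi * n) = Real.sqrt Real.pi * Real.sqrt (2 * n) := by
    rw [← Real.sqrt_mul Real.pi_pos.le]; ring_nf
  have key : Real.sqrt (2 * Real.pi * n) * ((n:ℝ) / Real.exp 1) ^ n ≤ (Nat.factorial n : ℝ) := by
    rw [hsq]
    calc Real.sqrt Real.pi * Real.sqrt (2 * n) * ((n:ℝ)/Real.exp 1)^n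
        ≤ (Nat.factorial n : ℝ) / (Real.sqrt (2 * n) * ((n:ℝ)/Real.exp 1)^n)
            * Real.sqrt (2 * n) * ((n:ℝ)/Real.exp 1)^n := by
          gcongr
      _ = (Nat.factorial n : ℝ) := by field_simp
  have hsqrt_pos : (0:ℝ) < Real.sqrt (2 * Real.pi * n) := by
    apply Real.sqrt_pos.mpr; positivity
  rw [div_le_div_iff₀ hfac hsqrt_pos]
  calc (n:ℝ)^n * Real.sqrt (2 * Real.pi * n)
      = Real.sqrt (2 * Real.pi * n) * ((n:ℝ)/Real.exp 1)^n * Real.exp n := by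
        rw [div_pow, ← Real.exp_nat_mul]
        field_simp [Real.exp_ne_zero]
        try ring
    _ = Real.exp n * (Real.sqrt (2 * Real.pi * n) * ((n:ℝ)/Real.exp 1)^n) := by ring
    _ ≤ Real.exp n * (Nat.factorial n : ℝ) := by gcongr
end

section
/- Let g be a positive integer and γ ∈ [0,1]. Define ξ = Σ_{k=0}^{g−1} √(C(g,k)·C(2g,k)) · (1−γ)^{3g/2−k} · γ^k, where C(n,k) is the binomial coefficient. Then 0 ≤ ξ ≤ 1. -/
/-- The effective-dephasing overlap
`ξ = Σ_{k=0}^{g-1} √(C(g,k)·C(2g,k)) (1-γ)^{3g/2-k} γᵏ` satisfies `0 ≤ ξ ≤ 1`. -/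
theorem xi_mem_unit_interval (g : ℕ) (hg : 0 < g) (γ : ℝ) (hγ0 : 0 ≤ γ) (hγ1 : γ ≤ 1) :
    0 ≤ ∑ k ∈ Finset.range g,
        Real.sqrt ((g.choose k : ℝ) * ((2 * g).choose k : ℝ)) *
          (1 - γ) ^ (3 * (g : ℝ) / 2 - (k : ℝ)) * γ ^ k ∧
    ∑ k ∈ Finset.range g,
        Real.sqrt ((g.choose k : ℝ) * ((2 * g).choose k : ℝ)) *
          (1 - γ) ^ (3 * (g : ℝ) / 2 - (k : ℝ)) * γ ^ k ≤ 1 := by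
  have hx : (0:ℝ) ≤ 1 - γ := by linarith
  set x : ℝ := 1 - γ with hxdef
  set f : ℕ → ℝ := fun k => Real.sqrt ((g.choose k : ℝ) * x ^ (g - k) * γ ^ k) with hf
  set F : ℕ → ℝ := fun k => Real.sqrt (((2 * g).choose k : ℝ) * x ^ (2 * g - k) * γ ^ k)
    with hF
  have hsqrtpow : ∀ n : ℕ, x ^ ((n : ℝ) / 2) = Real.sqrt (x ^ n) := by
    intro n
    rw [Real.sqrt_eq_rpow, ← Real.rpow_natCast x n, ← Real.rpow_mul hx]
    ring_nf
  have hterm : ∀ k ∈ Finset.range g,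
      Real.sqrt ((g.choose k : ℝ) * ((2 * g).choose k : ℝ)) *
          x ^ (3 * (g : ℝ) / 2 - (k : ℝ)) * γ ^ k = f k * F k := by
    intro k hk
    have hkg : k ≤ g := le_of_lt (Finset.mem_range.1 hk)
    have hk2g : k ≤ 2 * g := le_trans hkg (by omega)
    have hexp : 3 * (g : ℝ) / 2 - (k : ℝ) =
        ((g - k : ℕ) : ℝ) / 2 + ((2 * g - k : ℕ) : ℝ) / 2 := by
      have h1 : ((g - k : ℕ) : ℝ) = (g : ℝ) - k := by
        push_cast [Nat.cast_sub hkg]; ring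
      have h2 : ((2 * g - k : ℕ) : ℝ) = 2 * (g : ℝ) - k := by
        push_cast [Nat.cast_sub hk2g]; ring
      rw [h1, h2]; ring
    have hpos : ((g - k : ℕ) : ℝ) / 2 + ((2 * g - k : ℕ) : ℝ) / 2 ≠ 0 := by
      have : 0 < ((2 * g - k : ℕ) : ℝ) := by
        have : 0 < 2 * g - k := by omega
        exact_mod_cast this
      have h0 : (0:ℝ) ≤ ((g - k : ℕ) : ℝ) := Nat.cast_nonneg _
      positivity
    have hsplit : x ^ (3 * (g : ℝ) / 2 - (k : ℝ)) =
        Real.sqrt (x ^ (g - k)) * Real.sqrt (x ^ (2 * g - k)) := by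
      rw [hexp, Real.rpow_add' hx hpos, hsqrtpow, hsqrtpow]
    have hA : (0:ℝ) ≤ (g.choose k : ℝ) := Nat.cast_nonneg _
    have hB : (0:ℝ) ≤ ((2 * g).choose k : ℝ) := Nat.cast_nonneg _
    have e1 : Real.sqrt ((g.choose k : ℝ) * ((2 * g).choose k : ℝ)) =
        Real.sqrt (g.choose k) * Real.sqrt ((2 * g).choose k) := Real.sqrt_mul hA _
    have e2 : f k = Real.sqrt (g.choose k) * Real.sqrt (x ^ (g - k)) *
        Real.sqrt (γ ^ k) := by
      rw [hf]
      simp only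
      rw [Real.sqrt_mul (by positivity), Real.sqrt_mul hA]
    have e3 : F k = Real.sqrt ((2 * g).choose k) * Real.sqrt (x ^ (2 * g - k)) *
        Real.sqrt (γ ^ k) := by
      rw [hF]
      simp only
      rw [Real.sqrt_mul (by positivity), Real.sqrt_mul hB]
    have e4 : Real.sqrt (γ ^ k) * Real.sqrt (γ ^ k) = γ ^ k :=
      Real.mul_self_sqrt (pow_nonneg hγ0 k)
    rw [e1, hsplit, e2, e3]
    conv_lhs => rw [← e4]
    ring
  rw [Finset.sum_congr rfl hterm]
  have hS0 : 0 ≤ ∑ k ∈ Finset.range g, f k * F k :=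
    Finset.sum_nonneg fun k _ => mul_nonneg (Real.sqrt_nonneg _) (Real.sqrt_nonneg _)
  refine ⟨hS0, ?_⟩
  -- Cauchy–Schwarz
  have hCS := Finset.sum_mul_sq_le_sq_mul_sq (Finset.range g) f F
  have hf2 : ∑ k ∈ Finset.range g, f k ^ 2 ≤ 1 := by
    have hle : ∑ k ∈ Finset.range g, f k ^ 2 ≤ ∑ k ∈ Finset.range (g + 1), f k ^ 2 :=
      Finset.sum_le_sum_of_subset_of_nonneg
        (Finset.range_subset_range.2 (by omega)) (fun k _ _ => sq_nonneg _)
    have heq : ∑ k ∈ Finset.range (g + 1), f k ^ 2 = 1 := by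
      have : ∑ k ∈ Finset.range (g + 1), f k ^ 2 =
          ∑ k ∈ Finset.range (g + 1), γ ^ k * x ^ (g - k) * (g.choose k : ℝ) := by
        refine Finset.sum_congr rfl fun k _ => ?_
        rw [hf]
        simp only
        rw [Real.sq_sqrt (by positivity)]
        ring
      rw [this, ← add_pow γ x g]
      simp [hxdef]
    linarith
  have hF2 : ∑ k ∈ Finset.range g, F k ^ 2 ≤ 1 := by
    have hle : ∑ k ∈ Finset.range g, F k ^ 2 ≤ ∑ k ∈ Finset.range (2 * g + 1), F k ^ 2 :=
      Finset.sum_le_sum_of_subset_of_nonneg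
        (Finset.range_subset_range.2 (by omega)) (fun k _ _ => sq_nonneg _)
    have heq : ∑ k ∈ Finset.range (2 * g + 1), F k ^ 2 = 1 := by
      have : ∑ k ∈ Finset.range (2 * g + 1), F k ^ 2 =
          ∑ k ∈ Finset.range (2 * g + 1), γ ^ k * x ^ (2 * g - k) * (((2 * g).choose k) : ℝ) := by
        refine Finset.sum_congr rfl fun k _ => ?_
        rw [hF]
        simp only
        rw [Real.sq_sqrt (by positivity)]
        ring
      rw [this, ← add_pow γ x (2 * g)]
      simp [hxdef]
    linarith
  have hf2' : 0 ≤ ∑ k ∈ Finset.range g, f k ^ 2 :=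
    Finset.sum_nonneg fun k _ => sq_nonneg _
  have hF2' : 0 ≤ ∑ k ∈ Finset.range g, F k ^ 2 :=
    Finset.sum_nonneg fun k _ => sq_nonneg _
  nlinarith
end
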